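/- Consider the walk with transition kernel Q_p = p·Q_in + q·Q_out, q=1−p, p∈[0,1). Let 0<ℓ<n be integers, x∈L_ℓ, and let τ_o = min{t≥0 : X(t)=o} and τ_n = min{t≥0 : X(t)∈L_n}. If p≠q then P_x(τ_o<τ_n) = (r^n−r^ℓ)/(r^n−1) where r=p/q; if p=q=1/2 then P_x(τ_o<τ_n) = (n−ℓ)/n. In particular this probability depends only on ℓ=‖x‖ and not on the choice of x∈L_ℓ. -/

import Mathlib

open MeasureTheory Filter
open scoped Classical ENNReal

abbrev Z2 : Type := ℤ × ℤ

def origin : Z2 := (0, 0)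

def dnorm (x : Z2) : ℕ := x.1.natAbs + x.2.natAbs

def layer (k : ℕ) : Set Z2 := {x | dnorm x = k}

def layerCard (k : ℕ) : ℕ := if k = 0 then 1 else 4 * k

def diamond (r : ℝ) : Set Z2 := {x | (dnorm x : ℝ) ≤ r}

noncomputable def diamondF (n : ℕ) : Finset Z2 :=
  (Finset.Icc (-(n : ℤ), -(n : ℤ)) ((n : ℤ), (n : ℤ))).filter fun x => dnorm x ≤ n

def vol (n : ℕ) : ℕ := 2 * n * (n + 1) + 1

/-- A uniformly layered walk kernel: a Markov transition kernel on `ℤ²`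
satisfying conditions (U1), (U2), (U3). -/
structure IsULW (Q : Z2 → Z2 → ℝ) : Prop where
  nonneg : ∀ x y, 0 ≤ Q x y
  rowSum : ∀ x, ∑' y, Q x y = 1
  u1 : ∀ x y, dnorm x + 1 < dnorm y → Q x y = 0
  u2 : ∀ x, ∃ y, dnorm y = dnorm x + 1 ∧ 0 < Q x y
  u3 : ∀ (k : ℕ) (y z : Z2), dnorm y = dnorm z →
    ∑' x : layer k, Q x.1 y = ∑' x : layer k, Q x.1 z

/-- `X` is a Markov chain with transition kernel `Q` started at `x0`:
all finite-dimensional distributions are specified. -/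
def IsWalkFrom {Ω : Type} [MeasurableSpace Ω] (P : Measure Ω)
    (X : ℕ → Ω → Z2) (Q : Z2 → Z2 → ℝ) (x0 : Z2) : Prop :=
  ∀ (t : ℕ) (path : ℕ → Z2),
    P {ω | ∀ s ≤ t, X s ω = path s} =
      ENNReal.ofReal ((if path 0 = x0 then (1 : ℝ) else 0) *
        ∏ s ∈ Finset.range t, Q (path s) (path (s + 1)))

/-- `X` is a Markov chain with transition kernel `Q` started from the uniform
distribution on layer `L_k`. -/
def IsWalkUniform {Ω : Type} [MeasurableSpace Ω] (P : Measure Ω)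
    (X : ℕ → Ω → Z2) (Q : Z2 → Z2 → ℝ) (k : ℕ) : Prop :=
  ∀ (t : ℕ) (path : ℕ → Z2),
    P {ω | ∀ s ≤ t, X s ω = path s} =
      ENNReal.ofReal ((if dnorm (path 0) = k then (1 : ℝ) / layerCard k else 0) *
        ∏ s ∈ Finset.range t, Q (path s) (path (s + 1)))

/-- The walks `Y 0, Y 1, …` are independent. -/
def IndepWalks {Ω : Type} [MeasurableSpace Ω] (P : Measure Ω)
    (Y : ℕ → ℕ → Ω → Z2) : Prop :=
  ∀ (I : Finset ℕ) (t : ℕ) (path : ℕ → ℕ → Z2),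
    P {ω | ∀ i ∈ I, ∀ s ≤ t, Y i s ω = path i s} =
      ∏ i ∈ I, P {ω | ∀ s ≤ t, Y i s ω = path i s}

/-- Internal DLA clusters built from the walks `Y`:
`gCluster Y k = A(k+1)`, the cluster of `k+1` occupied sites; the walk `Y i`
is the walk performed by the particle producing `A(i+1)` from `A(i)`,
and `Y 0 0` is the position of the very first particle. -/
noncomputable def gCluster {Ω : Type} (Y : ℕ → ℕ → Ω → Z2) : ℕ → Ω → Finset Z2
  | 0 => fun ω => {Y 0 0 ω}
  | k + 1 => fun ω =>
      insert (Y (k + 1) (sInf {t | Y (k + 1) t ω ∉ gCluster Y k ω}) ω)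
        (gCluster Y k ω)

/-- The stopped process at level `n`: `stoppedC Y n k = S(k+1)`; particles also
stop upon reaching layer `L_n`. -/
noncomputable def stoppedC {Ω : Type} (Y : ℕ → ℕ → Ω → Z2) (n : ℕ) : ℕ → Ω → Finset Z2
  | 0 => fun _ => {origin}
  | k + 1 => fun ω =>
      insert (Y (k + 1)
          (sInf {t | Y (k + 1) t ω ∈ layer n ∨ Y (k + 1) t ω ∉ stoppedC Y n k ω}) ω)
        (stoppedC Y n k ω)

/-- The extended process at level `n`: `extC Y n i = E(i)`, starting from the full
diamond `D_n` and driven by the walks `Y (vol n + i)`. -/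
noncomputable def extC {Ω : Type} (Y : ℕ → ℕ → Ω → Z2) (n : ℕ) : ℕ → Ω → Finset Z2
  | 0 => fun _ => diamondF n
  | k + 1 => fun ω =>
      insert (Y (vol n + k) (sInf {t | Y (vol n + k) t ω ∉ extC Y n k ω}) ω)
        (extC Y n k ω)

/-- The outward directed kernel `Q_out`. -/
noncomputable def Qout (x y : Z2) : ℝ :=
  if x = origin then (if dnorm y = 1 then 1 / 4 else 0)
  else if x.1 ≠ 0 ∧ x.2 ≠ 0 then
    if y = (x.1, x.2 + x.2.sign) then
      ((x.2.natAbs : ℝ) + 1 / 2) / ((x.1.natAbs : ℝ) + (x.2.natAbs : ℝ) + 1)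
    else if y = (x.1 + x.1.sign, x.2) then
      ((x.1.natAbs : ℝ) + 1 / 2) / ((x.1.natAbs : ℝ) + (x.2.natAbs : ℝ) + 1)
    else 0
  else if x.2 = 0 then
    if y = (x.1, 1) ∨ y = (x.1, -1) then (1 / 2) / ((x.1.natAbs : ℝ) + 1)
    else if y = (x.1 + x.1.sign, 0) then (x.1.natAbs : ℝ) / ((x.1.natAbs : ℝ) + 1)
    else 0
  else
    if y = (1, x.2) ∨ y = (-1, x.2) then (1 / 2) / ((x.2.natAbs : ℝ) + 1)
    else if y = (0, x.2 + x.2.sign) then (x.2.natAbs : ℝ) / ((x.2.natAbs : ℝ) + 1)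
    else 0

/-- The inward directed kernel `Q_in`. -/
noncomputable def Qin (x y : Z2) : ℝ :=
  if x = origin then (if y = origin then 1 else 0)
  else if x.1 ≠ 0 ∧ x.2 ≠ 0 then
    if y = (x.1, x.2 - x.2.sign) then
      ((x.2.natAbs : ℝ) - 1 / 2) / ((x.1.natAbs : ℝ) + (x.2.natAbs : ℝ) - 1)
    else if y = (x.1 - x.1.sign, x.2) then
      ((x.1.natAbs : ℝ) - 1 / 2) / ((x.1.natAbs : ℝ) + (x.2.natAbs : ℝ) - 1)
    else 0
  else if x.2 = 0 then
    if y = (x.1 - x.1.sign, 0) then 1 else 0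
  else
    if y = (0, x.2 - x.2.sign) then 1 else 0

/-- The interpolating kernel `Q_p = p Q_in + (1-p) Q_out`. -/
noncomputable def Qp (p : ℝ) (x y : Z2) : ℝ := p * Qin x y + (1 - p) * Qout x y

/-- First hitting time of the set `A`, valued in `ℕ∞` (`⊤` when `A` is never visited). -/
noncomputable def hitTimeE {Ω : Type} (X : ℕ → Ω → Z2) (A : Set Z2) (ω : Ω) : ℕ∞ :=
  sInf ((fun t : ℕ => (t : ℕ∞)) '' {t | X t ω ∈ A})
section Kernel

lemma dnorm_eq_zero {y : Z2} : dnorm y = 0 ↔ y = origin := by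
  simp only [dnorm, origin, Prod.ext_iff]
  omega

lemma natAbs_add_sign {a : ℤ} (h : a ≠ 0) : (a + a.sign).natAbs = a.natAbs + 1 := by
  rcases lt_trichotomy a 0 with h1 | h1 | h1
  · rw [Int.sign_eq_neg_one_of_neg h1]; omega
  · exact absurd h1 h
  · rw [Int.sign_eq_one_of_pos h1]; omega

lemma natAbs_sub_sign {a : ℤ} (h : a ≠ 0) : (a - a.sign).natAbs = a.natAbs - 1 := by
  rcases lt_trichotomy a 0 with h1 | h1 | h1
  · rw [Int.sign_eq_neg_one_of_neg h1]; omega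
  · exact absurd h1 h
  · rw [Int.sign_eq_one_of_pos h1]; omega

lemma sign_ne_zero' {a : ℤ} (h : a ≠ 0) : a.sign ≠ 0 := by
  rcases lt_trichotomy a 0 with h1 | h1 | h1
  · rw [Int.sign_eq_neg_one_of_neg h1]; omega
  · exact absurd h1 h
  · rw [Int.sign_eq_one_of_pos h1]; omega

lemma one_le_natAbs_cast {a : ℤ} (h : a ≠ 0) : (1:ℝ) ≤ (a.natAbs : ℝ) := by
  have : 1 ≤ a.natAbs := Int.natAbs_pos.2 h
  exact_mod_cast this

lemma Qin_nonneg (x y : Z2) : 0 ≤ Qin x y := by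
  unfold Qin
  by_cases h1 : x = origin
  · simp only [if_pos h1]; split_ifs <;> norm_num
  rw [if_neg h1]
  by_cases h2 : x.1 ≠ 0 ∧ x.2 ≠ 0
  · rw [if_pos h2]
    have a1 := one_le_natAbs_cast h2.1
    have a2 := one_le_natAbs_cast h2.2
    split_ifs <;> first | (apply div_nonneg <;> linarith) | norm_num
  · rw [if_neg h2]; split_ifs <;> norm_num

lemma Qout_nonneg (x y : Z2) : 0 ≤ Qout x y := by
  have a1 : (0:ℝ) ≤ (x.1.natAbs : ℝ) := by positivity
  have a2 : (0:ℝ) ≤ (x.2.natAbs : ℝ) := by positivity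
  unfold Qout
  split_ifs <;> first | positivity | norm_num

lemma Qin_support {x y : Z2} (hx : x ≠ origin) (h : Qin x y ≠ 0) :
    dnorm y + 1 = dnorm x := by
  unfold Qin at h
  rw [if_neg hx] at h
  by_cases h2 : x.1 ≠ 0 ∧ x.2 ≠ 0
  · rw [if_pos h2] at h
    have b1 := Int.natAbs_pos.2 h2.1
    have b2 := Int.natAbs_pos.2 h2.2
    split_ifs at h with h3 h4
    · simp [h3, dnorm, natAbs_sub_sign h2.2]; omega
    · simp [h4, dnorm, natAbs_sub_sign h2.1]; omega
    · exact absurd rfl h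
  · rw [if_neg h2] at h
    by_cases h3 : x.2 = 0
    · rw [if_pos h3] at h
      have hx1 : x.1 ≠ 0 := fun h0 => hx (Prod.ext h0 h3)
      have := Int.natAbs_pos.2 hx1
      split_ifs at h with h4
      · simp [h4, dnorm, natAbs_sub_sign hx1, h3]; omega
      · exact absurd rfl h
    · rw [if_neg h3] at h
      have hx1 : x.1 = 0 := by tauto
      have := Int.natAbs_pos.2 h3
      split_ifs at h with h4
      · simp [h4, dnorm, natAbs_sub_sign h3, hx1]; omega
      · exact absurd rfl h

lemma Qout_support {x y : Z2} (h : Qout x y ≠ 0) : dnorm y = dnorm x + 1 := by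
  unfold Qout at h
  by_cases h1 : x = origin
  · rw [if_pos h1] at h
    split_ifs at h with h2
    · simpa [h1, dnorm, origin] using h2
    · exact absurd rfl h
  · rw [if_neg h1] at h
    by_cases h2 : x.1 ≠ 0 ∧ x.2 ≠ 0
    · rw [if_pos h2] at h
      split_ifs at h with h3 h4
      · simp [h3, dnorm, natAbs_add_sign h2.2]; omega
      · simp [h4, dnorm, natAbs_add_sign h2.1]; omega
      · exact absurd rfl h
    · rw [if_neg h2] at h
      by_cases h3 : x.2 = 0
      · rw [if_pos h3] at h
        have hx1 : x.1 ≠ 0 := fun h0 => h1 (Prod.ext h0 h3)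
        split_ifs at h with h4 h5
        · rcases h4 with h4 | h4 <;> simp [h4, dnorm, h3]
        · simp [h5, dnorm, natAbs_add_sign hx1, h3]
        · exact absurd rfl h
      · rw [if_neg h3] at h
        have hx1 : x.1 = 0 := by tauto
        split_ifs at h with h4 h5
        · rcases h4 with h4 | h4 <;> simp [h4, dnorm, hx1] <;> omega
        · simp [h5, dnorm, natAbs_add_sign h3, hx1]
        · exact absurd rfl h

end Kernel
section RowSum

open ENNReal

lemma tsum_pair_en {f : Z2 → ℝ≥0∞} {a b : Z2} (hab : a ≠ b)
    (h : ∀ z, z ≠ a → z ≠ b → f z = 0) : ∑' z, f z = f a + f b := by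
  rw [tsum_eq_sum (s := {a, b}) (by intro z hz; simp at hz; exact h z hz.1 hz.2)]
  exact Finset.sum_pair hab

lemma dnorm_eq_one {z : Z2} : dnorm z = 1 ↔
    z = ((1:ℤ),(0:ℤ)) ∨ z = (-1,0) ∨ z = (0,1) ∨ z = (0,-1) := by
  simp only [dnorm, Prod.ext_iff]
  omega

lemma Qin_rowsum (x : Z2) : ∑' z, ENNReal.ofReal (Qin x z) = 1 := by
  by_cases h1 : x = origin
  · rw [tsum_eq_single origin (by
      intro z hz
      simp [Qin, h1, hz])]
    simp [Qin, h1]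
  by_cases h2 : x.1 ≠ 0 ∧ x.2 ≠ 0
  · have s1 := sign_ne_zero' h2.1
    have s2 := sign_ne_zero' h2.2
    have c1 := one_le_natAbs_cast h2.1
    have c2 := one_le_natAbs_cast h2.2
    have hab : ((x.1, x.2 - x.2.sign) : Z2) ≠ (x.1 - x.1.sign, x.2) := by
      intro hh; rw [Prod.mk.injEq] at hh; omega
    rw [tsum_pair_en hab (by
      intro z hz1 hz2
      simp only [Qin, if_neg h1, if_pos h2, if_neg hz1, if_neg hz2]
      simp)]
    have e1 : Qin x (x.1, x.2 - x.2.sign) =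
        ((x.2.natAbs : ℝ) - 1 / 2) / ((x.1.natAbs : ℝ) + (x.2.natAbs : ℝ) - 1) := by
      simp only [Qin, if_neg h1, if_pos h2, if_pos rfl]
      simp
    have e2 : Qin x (x.1 - x.1.sign, x.2) =
        ((x.1.natAbs : ℝ) - 1 / 2) / ((x.1.natAbs : ℝ) + (x.2.natAbs : ℝ) - 1) := by
      have hne : ((x.1 - x.1.sign, x.2) : Z2) ≠ (x.1, x.2 - x.2.sign) := by
        intro hh; rw [Prod.mk.injEq] at hh; omega
      simp only [Qin, if_neg h1, if_pos h2, if_neg hne, if_pos rfl]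
      simp
    rw [e1, e2, ← ENNReal.ofReal_add (by apply div_nonneg <;> linarith)
      (by apply div_nonneg <;> linarith), ← add_div]
    have hD : ((x.1.natAbs : ℝ) + (x.2.natAbs : ℝ) - 1) ≠ 0 := by linarith
    rw [show ((x.2.natAbs : ℝ) - 1/2) + ((x.1.natAbs : ℝ) - 1/2)
        = (x.1.natAbs : ℝ) + (x.2.natAbs : ℝ) - 1 by ring, div_self hD]
    simp
  by_cases h3 : x.2 = 0
  · have hx1 : x.1 ≠ 0 := fun h0 => h1 (Prod.ext h0 h3)
    rw [tsum_eq_single ((x.1 - x.1.sign, 0) : Z2) (by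
      intro z hz
      simp only [Qin, if_neg h1, if_neg h2, if_pos h3, if_neg hz]
      simp)]
    simp [Qin, if_neg h1, if_neg h2, if_pos h3]
  · have hx1 : x.1 = 0 := by tauto
    rw [tsum_eq_single ((0, x.2 - x.2.sign) : Z2) (by
      intro z hz
      simp only [Qin, if_neg h1, if_neg h2, if_neg h3, if_neg hz]
      simp)]
    simp [Qin, if_neg h1, if_neg h2, if_neg h3]

lemma Qout_rowsum (x : Z2) : ∑' z, ENNReal.ofReal (Qout x z) = 1 := by
  by_cases h1 : x = origin
  · rw [tsum_eq_sum (s := {((1:ℤ),(0:ℤ)), (-1,0), (0,1), (0,-1)}) (by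
      intro z hz
      simp only [Finset.mem_insert, Finset.mem_singleton] at hz
      push_neg at hz
      have : dnorm z ≠ 1 := fun hd => by
        rcases dnorm_eq_one.1 hd with h|h|h|h <;> tauto
      simp [Qout, h1, this])]
    have ev : ∀ z : Z2, dnorm z = 1 → ENNReal.ofReal (Qout origin z) = ENNReal.ofReal (1/4) := by
      intro z hz; simp [Qout, hz]
    rw [h1]
    rw [Finset.sum_insert (by decide), Finset.sum_insert (by decide),
        Finset.sum_insert (by decide), Finset.sum_singleton]
    rw [ev _ (by simp [dnorm]), ev _ (by simp [dnorm]), ev _ (by simp [dnorm]),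
        ev _ (by simp [dnorm])]
    rw [← ENNReal.ofReal_add (by norm_num) (by norm_num),
        ← ENNReal.ofReal_add (by norm_num) (by norm_num),
        ← ENNReal.ofReal_add (by norm_num) (by norm_num)]
    norm_num
  by_cases h2 : x.1 ≠ 0 ∧ x.2 ≠ 0
  · have s1 := sign_ne_zero' h2.1
    have s2 := sign_ne_zero' h2.2
    have c1 := one_le_natAbs_cast h2.1
    have c2 := one_le_natAbs_cast h2.2
    have hab : ((x.1, x.2 + x.2.sign) : Z2) ≠ (x.1 + x.1.sign, x.2) := by
      intro hh; rw [Prod.mk.injEq] at hh; omega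
    rw [tsum_pair_en hab (by
      intro z hz1 hz2
      simp only [Qout, if_neg h1, if_pos h2, if_neg hz1, if_neg hz2]
      simp)]
    have e1 : Qout x (x.1, x.2 + x.2.sign) =
        ((x.2.natAbs : ℝ) + 1 / 2) / ((x.1.natAbs : ℝ) + (x.2.natAbs : ℝ) + 1) := by
      simp only [Qout, if_neg h1, if_pos h2, if_pos rfl]
      simp
    have e2 : Qout x (x.1 + x.1.sign, x.2) =
        ((x.1.natAbs : ℝ) + 1 / 2) / ((x.1.natAbs : ℝ) + (x.2.natAbs : ℝ) + 1) := by
      have hne : ((x.1 + x.1.sign, x.2) : Z2) ≠ (x.1, x.2 + x.2.sign) := by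
        intro hh; rw [Prod.mk.injEq] at hh; omega
      simp only [Qout, if_neg h1, if_pos h2, if_neg hne, if_pos rfl]
      simp
    rw [e1, e2, ← ENNReal.ofReal_add (by apply div_nonneg <;> linarith)
      (by apply div_nonneg <;> linarith), ← add_div]
    have hD : ((x.1.natAbs : ℝ) + (x.2.natAbs : ℝ) + 1) ≠ 0 := by linarith
    rw [show ((x.2.natAbs : ℝ) + 1/2) + ((x.1.natAbs : ℝ) + 1/2)
        = (x.1.natAbs : ℝ) + (x.2.natAbs : ℝ) + 1 by ring, div_self hD]
    simp
  by_cases h3 : x.2 = 0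
  · have hx1 : x.1 ≠ 0 := fun h0 => h1 (Prod.ext h0 h3)
    have s1 := sign_ne_zero' hx1
    have c1 := one_le_natAbs_cast hx1
    have hD : ((x.1.natAbs : ℝ) + 1) ≠ 0 := by linarith
    have hne1 : ((x.1, (1:ℤ)) : Z2) ≠ (x.1, -1) := by simp
    have hne2 : ((x.1 + x.1.sign, (0:ℤ)) : Z2) ≠ (x.1, 1) := by
      intro hh; rw [Prod.mk.injEq] at hh; omega
    have hne3 : ((x.1 + x.1.sign, (0:ℤ)) : Z2) ≠ (x.1, -1) := by
      intro hh; rw [Prod.mk.injEq] at hh; omega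
    rw [tsum_eq_sum (s := {((x.1, (1:ℤ)) : Z2), (x.1, -1), (x.1 + x.1.sign, 0)}) (by
      intro z hz
      simp only [Finset.mem_insert, Finset.mem_singleton] at hz
      push_neg at hz
      simp only [Qout, if_neg h1, if_neg h2, if_pos h3,
        if_neg (by tauto : ¬(z = (x.1, 1) ∨ z = (x.1, -1))), if_neg hz.2.2]
      simp)]
    rw [Finset.sum_insert (by simp [hne1, hne2.symm]), Finset.sum_insert (by simp [hne3.symm]),
        Finset.sum_singleton]
    have e1 : Qout x (x.1, 1) = (1/2) / ((x.1.natAbs : ℝ) + 1) := by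
      simp only [Qout, if_neg h1, if_neg h2, if_pos h3, if_pos (Or.inl rfl)]
      simp
    have e2 : Qout x (x.1, -1) = (1/2) / ((x.1.natAbs : ℝ) + 1) := by
      simp only [Qout, if_neg h1, if_neg h2, if_pos h3, if_pos (Or.inr rfl)]
      simp
    have e3 : Qout x (x.1 + x.1.sign, 0) = (x.1.natAbs : ℝ) / ((x.1.natAbs : ℝ) + 1) := by
      simp only [Qout, if_neg h1, if_neg h2, if_pos h3,
        if_neg (by tauto : ¬((x.1 + x.1.sign, (0:ℤ)) = (x.1, 1) ∨ (x.1 + x.1.sign, (0:ℤ)) = (x.1, -1))),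
        if_pos rfl]
      simp
    rw [e1, e2, e3, ← ENNReal.ofReal_add (by positivity) (by positivity),
        ← ENNReal.ofReal_add (by positivity) (by positivity), ← add_div, ← add_div]
    rw [show (1:ℝ)/2 + (1/2 + (x.1.natAbs : ℝ)) = (x.1.natAbs : ℝ) + 1 by ring, div_self hD]
    simp
  · have hx1 : x.1 = 0 := by tauto
    have s1 := sign_ne_zero' h3
    have c1 := one_le_natAbs_cast h3
    have hD : ((x.2.natAbs : ℝ) + 1) ≠ 0 := by linarith
    have hne1 : (((1:ℤ), x.2) : Z2) ≠ (-1, x.2) := by simp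
    have hne2 : (((0:ℤ), x.2 + x.2.sign) : Z2) ≠ (1, x.2) := by
      intro hh; rw [Prod.mk.injEq] at hh; omega
    have hne3 : (((0:ℤ), x.2 + x.2.sign) : Z2) ≠ (-1, x.2) := by
      intro hh; rw [Prod.mk.injEq] at hh; omega
    rw [tsum_eq_sum (s := {(((1:ℤ), x.2) : Z2), (-1, x.2), (0, x.2 + x.2.sign)}) (by
      intro z hz
      simp only [Finset.mem_insert, Finset.mem_singleton] at hz
      push_neg at hz
      simp only [Qout, if_neg h1, if_neg h2, if_neg h3,
        if_neg (by tauto : ¬(z = (1, x.2) ∨ z = (-1, x.2))), if_neg hz.2.2]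
      simp)]
    rw [Finset.sum_insert (by simp [hne1, hne2.symm]), Finset.sum_insert (by simp [hne3.symm]),
        Finset.sum_singleton]
    have e1 : Qout x (1, x.2) = (1/2) / ((x.2.natAbs : ℝ) + 1) := by
      simp only [Qout, if_neg h1, if_neg h2, if_neg h3, if_pos (Or.inl rfl)]
      simp
    have e2 : Qout x (-1, x.2) = (1/2) / ((x.2.natAbs : ℝ) + 1) := by
      simp only [Qout, if_neg h1, if_neg h2, if_neg h3, if_pos (Or.inr rfl)]
      simp
    have e3 : Qout x (0, x.2 + x.2.sign) = (x.2.natAbs : ℝ) / ((x.2.natAbs : ℝ) + 1) := by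
      simp only [Qout, if_neg h1, if_neg h2, if_neg h3,
        if_neg (by tauto : ¬(((0:ℤ), x.2 + x.2.sign) = (1, x.2) ∨ ((0:ℤ), x.2 + x.2.sign) = (-1, x.2))),
        if_pos rfl]
      simp
    rw [e1, e2, e3, ← ENNReal.ofReal_add (by positivity) (by positivity),
        ← ENNReal.ofReal_add (by positivity) (by positivity), ← add_div, ← add_div]
    rw [show (1:ℝ)/2 + (1/2 + (x.2.natAbs : ℝ)) = (x.2.natAbs : ℝ) + 1 by ring, div_self hD]
    simp

end RowSum
section QPlem

variable {p : ℝ}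

lemma Qp_nonneg (hp0 : 0 ≤ p) (hp1 : p ≤ 1) (x y : Z2) : 0 ≤ Qp p x y :=
  add_nonneg (mul_nonneg hp0 (Qin_nonneg x y)) (mul_nonneg (by linarith) (Qout_nonneg x y))

lemma qk_rowsum (hp0 : 0 ≤ p) (hp1 : p ≤ 1) (y : Z2) :
    ∑' z, ENNReal.ofReal (Qp p y z) = 1 := by
  have hq : (0:ℝ) ≤ 1 - p := by linarith
  have pe : ∀ z, ENNReal.ofReal (Qp p y z) =
      ENNReal.ofReal p * ENNReal.ofReal (Qin y z)
        + ENNReal.ofReal (1-p) * ENNReal.ofReal (Qout y z) := by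
    intro z
    rw [Qp, ENNReal.ofReal_add (mul_nonneg hp0 (Qin_nonneg y z))
      (mul_nonneg hq (Qout_nonneg y z)), ENNReal.ofReal_mul hp0, ENNReal.ofReal_mul hq]
  simp only [pe]
  rw [Summable.tsum_add ENNReal.summable ENNReal.summable, ENNReal.tsum_mul_left,
    ENNReal.tsum_mul_left, Qin_rowsum, Qout_rowsum, mul_one, mul_one,
    ← ENNReal.ofReal_add hp0 hq]
  norm_num

lemma qk_radial (hp0 : 0 ≤ p) (hp1 : p ≤ 1) {y : Z2} (hy : y ≠ origin) (c : ℕ → ℝ≥0∞) :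
    ∑' z, ENNReal.ofReal (Qp p y z) * c (dnorm z)
      = ENNReal.ofReal p * c (dnorm y - 1) + ENNReal.ofReal (1 - p) * c (dnorm y + 1) := by
  have hq : (0:ℝ) ≤ 1 - p := by linarith
  have pe : ∀ z, ENNReal.ofReal (Qp p y z) * c (dnorm z)
      = ENNReal.ofReal p * c (dnorm y - 1) * ENNReal.ofReal (Qin y z)
        + ENNReal.ofReal (1-p) * c (dnorm y + 1) * ENNReal.ofReal (Qout y z) := by
    intro z
    rw [Qp, ENNReal.ofReal_add (mul_nonneg hp0 (Qin_nonneg y z))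
      (mul_nonneg hq (Qout_nonneg y z)), ENNReal.ofReal_mul hp0, ENNReal.ofReal_mul hq,
      add_mul]
    congr 1
    · by_cases h : Qin y z = 0
      · simp [h]
      · have h2 := Qin_support hy h
        have h3 : dnorm z = dnorm y - 1 := by omega
        rw [h3]; ring
    · by_cases h : Qout y z = 0
      · simp [h]
      · rw [Qout_support h]; ring
  simp only [pe]
  rw [Summable.tsum_add ENNReal.summable ENNReal.summable, ENNReal.tsum_mul_left,
    ENNReal.tsum_mul_left, Qin_rowsum, Qout_rowsum, mul_one, mul_one]

end QPlem
section OneD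

noncomputable def Fr (p : ℝ) (n : ℕ) : ℕ → ℕ → ℝ
  | 0, k => if k = 0 then 1 else 0
  | t+1, k => if k = 0 then 1 else if n ≤ k then 0
      else p * Fr p n t (k-1) + (1-p) * Fr p n t (k+1)

variable {p : ℝ} {n : ℕ}

lemma Fr_nonneg (hp0 : 0 ≤ p) (hp1 : p ≤ 1) : ∀ t k, 0 ≤ Fr p n t k := by
  intro t
  induction t with
  | zero => intro k; rw [Fr]; split_ifs <;> norm_num
  | succ t ih =>
    intro k
    rw [Fr]
    split_ifs <;> try norm_num
    have := ih (k-1); have := ih (k+1)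
    have : (0:ℝ) ≤ 1 - p := by linarith
    positivity

lemma Fr_le_one (hp0 : 0 ≤ p) (hp1 : p ≤ 1) : ∀ t k, Fr p n t k ≤ 1 := by
  intro t
  induction t with
  | zero => intro k; rw [Fr]; split_ifs <;> norm_num
  | succ t ih =>
    intro k
    rw [Fr]
    split_ifs <;> try norm_num
    have a1 := ih (k-1); have a2 := ih (k+1)
    have b1 := Fr_nonneg (n := n) hp0 hp1 t (k-1); have b2 := Fr_nonneg (n := n) hp0 hp1 t (k+1)
    nlinarith

lemma Fr_mono (hp0 : 0 ≤ p) (hp1 : p ≤ 1) : ∀ t k, Fr p n t k ≤ Fr p n (t+1) k := by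
  intro t
  induction t with
  | zero =>
    intro k
    rw [Fr, Fr]
    split_ifs with h1 h2 <;> try norm_num
    have b1 := Fr_nonneg (n := n) hp0 hp1 0 (k-1); have b2 := Fr_nonneg (n := n) hp0 hp1 0 (k+1)
    have : (0:ℝ) ≤ 1 - p := by linarith
    positivity
  | succ t ih =>
    intro k
    rw [Fr, show Fr p n (t+1+1) k = if k = 0 then 1 else if n ≤ k then 0
      else p * Fr p n (t+1) (k-1) + (1-p) * Fr p n (t+1) (k+1) from rfl]
    split_ifs <;> try norm_num
    have a1 := ih (k-1); have a2 := ih (k+1)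
    have : (0:ℝ) ≤ 1 - p := by linarith
    nlinarith

lemma Fr_monotone (hp0 : 0 ≤ p) (hp1 : p ≤ 1) (k : ℕ) :
    Monotone fun t => Fr p n t k :=
  monotone_nat_of_le_succ fun t => Fr_mono hp0 hp1 t k

noncomputable def Flim (p : ℝ) (n k : ℕ) : ℝ := ⨆ t, Fr p n t k

lemma Flim_tendsto (hp0 : 0 ≤ p) (hp1 : p ≤ 1) (k : ℕ) :
    Filter.Tendsto (fun t => Fr p n t k) Filter.atTop (nhds (Flim p n k)) :=
  tendsto_atTop_ciSup (Fr_monotone hp0 hp1 k)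
    ⟨1, by rintro r ⟨t, rfl⟩; exact Fr_le_one hp0 hp1 t k⟩

lemma Flim_zero : Flim p n 0 = 1 := by
  have : ∀ t, Fr p n t 0 = 1 := by intro t; cases t <;> rw [Fr] <;> simp
  simp [Flim, this]

lemma Flim_big (hn : 1 ≤ n) {k : ℕ} (hk : n ≤ k) : Flim p n k = 0 := by
  have : ∀ t, Fr p n t k = 0 := by
    intro t; cases t <;> rw [Fr] <;> simp_all <;> omega
  simp [Flim, this]

lemma Flim_harmonic (hp0 : 0 ≤ p) (hp1 : p ≤ 1) {k : ℕ} (hk0 : 0 < k) (hkn : k < n) :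
    Flim p n k = p * Flim p n (k-1) + (1-p) * Flim p n (k+1) := by
  have h1 : Filter.Tendsto (fun t => Fr p n (t+1) k) Filter.atTop (nhds (Flim p n k)) :=
    (Flim_tendsto hp0 hp1 k).comp (Filter.tendsto_add_atTop_nat 1)
  have h2 : (fun t => Fr p n (t+1) k)
      = fun t => p * Fr p n t (k-1) + (1-p) * Fr p n t (k+1) := by
    funext t
    rw [Fr, if_neg (by omega), if_neg (by omega)]
  rw [h2] at h1
  have h3 : Filter.Tendsto (fun t => p * Fr p n t (k-1) + (1-p) * Fr p n t (k+1))
      Filter.atTop (nhds (p * Flim p n (k-1) + (1-p) * Flim p n (k+1))) :=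
    ((Flim_tendsto hp0 hp1 (k-1)).const_mul p).add
      ((Flim_tendsto hp0 hp1 (k+1)).const_mul (1-p))
  exact tendsto_nhds_unique h1 h3

noncomputable def Wg (p : ℝ) (k : ℕ) : ℝ := ∑ i ∈ Finset.range k, (p / (1-p))^i

lemma Wg_zero : Wg p 0 = 0 := by simp [Wg]
lemma Wg_one : Wg p 1 = 1 := by simp [Wg]

lemma Wg_pos (hp0 : 0 ≤ p) (hp1 : p < 1) {k : ℕ} (hk : 1 ≤ k) : 0 < Wg p k := by
  have hr : 0 ≤ p / (1-p) := div_nonneg hp0 (by linarith)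
  have : Wg p k = 1 + ∑ i ∈ Finset.range (k-1), (p/(1-p))^(i+1) := by
    rw [Wg, show k = (k-1)+1 by omega, Finset.sum_range_succ']
    simp [add_comm]
  rw [this]
  have : 0 ≤ ∑ i ∈ Finset.range (k-1), (p/(1-p))^(i+1) :=
    Finset.sum_nonneg fun i _ => pow_nonneg hr _
  linarith

lemma Wg_harmonic (hp1 : p < 1) (k : ℕ) :
    p * Wg p k + (1-p) * Wg p (k+2) = Wg p (k+1) := by
  have hq : (1:ℝ) - p ≠ 0 := by linarith
  have e2 : Wg p (k+2) = Wg p (k+1) + (p/(1-p))^(k+1) := by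
    rw [Wg, Finset.sum_range_succ]; rfl
  have e1 : Wg p (k+1) = Wg p k + (p/(1-p))^k := by
    rw [Wg, Finset.sum_range_succ]; rfl
  have key : (1-p) * (p/(1-p))^(k+1) = p * (p/(1-p))^k := by
    rw [pow_succ]; field_simp
  rw [e2, e1]
  nlinarith [key]

end OneD
section Unique

variable {p : ℝ} {n : ℕ}

lemma Flim_eq_ratio (hp0 : 0 ≤ p) (hp1 : p < 1) (hn : 1 ≤ n) :
    ∀ k ≤ n, Flim p n k = (Wg p n - Wg p k) / Wg p n := by
  have hp1' : p ≤ 1 := le_of_lt hp1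
  have hq : (1:ℝ) - p ≠ 0 := by linarith
  have hWn : Wg p n ≠ 0 := (Wg_pos hp0 hp1 hn).ne'
  set D : ℕ → ℝ := fun k => Flim p n k - (Wg p n - Wg p k) / Wg p n with hD
  have hD0 : D 0 = 0 := by simp [hD, Flim_zero, Wg_zero, div_self hWn]
  have hDlin : ∀ k, k ≤ n → D k = D 1 * Wg p k := by
    have step : ∀ k, (k ≤ n → D k = D 1 * Wg p k) ∧ (k + 1 ≤ n → D (k+1) = D 1 * Wg p (k+1)) := by
      intro k
      induction k with
      | zero =>
        refine ⟨fun _ => by simp [hD0, Wg_zero], fun _ => by simp [Wg_one]⟩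
      | succ k ih =>
        refine ⟨fun h => ih.2 h, fun h => ?_⟩
        have hk1 : 0 < k + 1 := by omega
        have hk2 : k + 1 < n := by omega
        have harm : Flim p n (k+1) = p * Flim p n k + (1-p) * Flim p n (k+2) := by
          have := Flim_harmonic (n := n) hp0 hp1' hk1 hk2
          simpa using this
        have wharm := Wg_harmonic (p := p) hp1 k
        have hDk : D k = D 1 * Wg p k := ih.1 (by omega)
        have hDk1 : D (k+1) = D 1 * Wg p (k+1) := ih.2 (by omega)
        have harmD : D (k+1) = p * D k + (1-p) * D (k+2) := by
          simp only [hD]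
          linear_combination harm - wharm / Wg p n
        have key : (1-p) * D (k+2) = D 1 * (Wg p (k+1) - p * Wg p k) := by
          linear_combination -harmD + hDk1 - p * hDk
        exact mul_left_cancel₀ hq (by linear_combination key - wharm * D 1)
    exact fun k hk => (step k).1 hk
  have hDn : D n = 0 := by
    simp [hD, Flim_big hn (le_refl n), div_self hWn]
  have hD1 : D 1 = 0 := by
    have := hDlin n (le_refl n)
    rw [hDn] at this
    rcases mul_eq_zero.1 this.symm with h | h
    · exact h
    · exact absurd h hWn
  intro k hk
  have := hDlin k hk
  rw [hD1] at this
  simp only [hD] at this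
  linarith [this]

end Unique
section Harm

open ENNReal

noncomputable def Fh (p : ℝ) (n : ℕ) : ℕ → Z2 → ℝ≥0∞
  | 0, y => if y = origin then 1 else 0
  | t+1, y => if y = origin then 1 else if n ≤ dnorm y then 0
      else ∑' z, ENNReal.ofReal (Qp p y z) * Fh p n t z

noncomputable def Gh (p : ℝ) (n : ℕ) : ℕ → Z2 → ℝ≥0∞
  | 0, y => if y = origin then 1 else 0
  | t+1, y => if y ≠ origin ∧ dnorm y ≠ n then
      ∑' z, ENNReal.ofReal (Qp p y z) * Gh p n t z else 0

variable {p : ℝ} {n : ℕ}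

lemma dnorm_origin : dnorm origin = 0 := rfl

lemma Qp_support {y z : Z2} (hy : y ≠ origin) (h : Qp p y z ≠ 0) :
    dnorm z + 1 = dnorm y ∨ dnorm z = dnorm y + 1 := by
  rw [Qp] at h
  by_cases h1 : Qin y z = 0
  · by_cases h2 : Qout y z = 0
    · simp [h1, h2] at h
    · exact Or.inr (Qout_support h2)
  · exact Or.inl (Qin_support hy h1)

lemma Fh_eq_Fr (hp0 : 0 ≤ p) (hp1 : p ≤ 1) (hn : 1 ≤ n) :
    ∀ t y, Fh p n t y = ENNReal.ofReal (Fr p n t (dnorm y)) := by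
  intro t
  induction t with
  | zero =>
    intro y
    rw [Fh, Fr]
    by_cases hy : y = origin
    · simp [hy, dnorm_origin]
    · have : dnorm y ≠ 0 := fun h => hy (dnorm_eq_zero.1 h)
      simp [hy, this]
  | succ t ih =>
    intro y
    rw [Fh, Fr]
    by_cases hy : y = origin
    · simp [hy, dnorm_origin]
    · have hd : dnorm y ≠ 0 := fun h => hy (dnorm_eq_zero.1 h)
      rw [if_neg hy, if_neg hd]
      by_cases hny : n ≤ dnorm y
      · simp [hny]
      · rw [if_neg hny, if_neg hny]
        simp only [ih]
        rw [qk_radial hp0 hp1 hy (fun k => ENNReal.ofReal (Fr p n t k)),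
          ← ENNReal.ofReal_mul hp0, ← ENNReal.ofReal_mul (by linarith : (0:ℝ) ≤ 1 - p),
          ← ENNReal.ofReal_add (mul_nonneg hp0 (Fr_nonneg hp0 hp1 _ _))
            (mul_nonneg (by linarith) (Fr_nonneg hp0 hp1 _ _))]

lemma Fh_big (hn : 1 ≤ n) {t : ℕ} {y : Z2} (h : n ≤ dnorm y) : Fh p n t y = 0 := by
  have hy : y ≠ origin := by
    intro h0; rw [h0, dnorm_origin] at h; omega
  cases t with
  | zero => rw [Fh, if_neg hy]
  | succ t => rw [Fh, if_neg hy, if_pos h]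

lemma Gh_sum (hp0 : 0 ≤ p) (hp1 : p ≤ 1) (hn : 1 ≤ n) :
    ∀ T y, ∑ t ∈ Finset.range (T+1), Gh p n t y = Fh p n T y := by
  intro T
  induction T with
  | zero =>
    intro y
    rw [Finset.sum_range_one, Gh, Fh]
  | succ T ih =>
    intro y
    rw [Finset.sum_range_succ']
    by_cases hy : y = origin
    · have g0 : Gh p n 0 y = 1 := by rw [Gh, if_pos hy]
      have gs : ∀ t, Gh p n (t+1) y = 0 := by
        intro t; rw [Gh, if_neg (by simp [hy])]
      simp only [gs, g0, Finset.sum_const_zero, zero_add, Fh, if_pos hy]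
    · have g0 : Gh p n 0 y = 0 := by rw [Gh, if_neg hy]
      by_cases hdn : dnorm y = n
      · have gs : ∀ t, Gh p n (t+1) y = 0 := by
          intro t; rw [Gh, if_neg (by simp [hdn])]
        have : n ≤ dnorm y := le_of_eq hdn.symm
        simp only [gs, g0, Finset.sum_const_zero, add_zero, Fh, if_neg hy, if_pos this]
      · have gs : ∀ t, Gh p n (t+1) y
            = ∑' z, ENNReal.ofReal (Qp p y z) * Gh p n t z := by
          intro t; rw [Gh, if_pos ⟨hy, hdn⟩]
        simp only [gs, g0, add_zero]
        rw [← Summable.tsum_finsetSum (fun i _ => ENNReal.summable)]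
        have inner : ∀ z, (∑ t ∈ Finset.range (T+1), ENNReal.ofReal (Qp p y z) * Gh p n t z)
            = ENNReal.ofReal (Qp p y z) * Fh p n T z := by
          intro z
          rw [← Finset.mul_sum, ih z]
        simp only [inner]
        rw [Fh]
        rw [if_neg hy]
        by_cases hny : n ≤ dnorm y
        · rw [if_pos hny]
          have hbig : n < dnorm y := lt_of_le_of_ne hny (Ne.symm hdn)
          have : ∀ z, ENNReal.ofReal (Qp p y z) * Fh p n T z = 0 := by
            intro z
            by_cases hq : Qp p y z = 0
            · simp [hq]
            · have := Qp_support hy hq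
              have : n ≤ dnorm z := by omega
              rw [Fh_big hn this, mul_zero]
          simp [this]
        · rw [if_neg hny]

end Harm
section Paths

open ENNReal

def extp (t : ℕ) (g : Fin (t+1) → Z2) : ℕ → Z2 := fun s => g ⟨min s t, by omega⟩

noncomputable def wgt (p : ℝ) (t : ℕ) (g : Fin (t+1) → Z2) : ℝ≥0∞ :=
  ∏ s ∈ Finset.range t, ENNReal.ofReal (Qp p (extp t g s) (extp t g (s+1)))

def goodV (n t : ℕ) (g : Fin (t+1) → Z2) : Prop :=
  ∃ u ≤ t, extp t g u = origin ∧ ∀ s < u, dnorm (extp t g s) ≠ n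

def firstV (n t : ℕ) (g : Fin (t+1) → Z2) : Prop :=
  extp t g t = origin ∧ ∀ s < t, extp t g s ≠ origin ∧ dnorm (extp t g s) ≠ n

lemma extp_le {t : ℕ} (g : Fin (t+1) → Z2) {s : ℕ} (hs : s ≤ t) :
    extp t g s = g ⟨s, by omega⟩ := by
  unfold extp
  have e : (⟨min s t, by omega⟩ : Fin (t+1)) = ⟨s, by omega⟩ := by
    ext; simp [Nat.min_eq_left hs]
  rw [e]

lemma extp_zero {t : ℕ} (g : Fin (t+1) → Z2) : extp t g 0 = g 0 := by
  rw [extp_le g (Nat.zero_le t)]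
  congr 1

lemma extp_tail {t : ℕ} (g : Fin (t+2) → Z2) (s : ℕ) :
    extp (t+1) g (s+1) = extp t (fun i => g i.succ) s := by
  unfold extp
  show g _ = g (Fin.succ _)
  congr 1
  ext
  simp only [Fin.val_succ]
  omega

lemma extp_cons_zero {t : ℕ} (z : Z2) (h : Fin (t+1) → Z2) :
    extp (t+1) (Fin.cons z h) 0 = z := by
  rw [extp_zero, Fin.cons_zero]

lemma tail_cons {t : ℕ} (z : Z2) (h : Fin (t+1) → Z2) :
    (fun i : Fin (t+1) => Fin.cons (α := fun _ : Fin (t+2) => Z2) z h i.succ) = h := by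
  funext i
  simp

lemma extp_cons_succ {t : ℕ} (z : Z2) (h : Fin (t+1) → Z2) (s : ℕ) :
    extp (t+1) (Fin.cons z h) (s+1) = extp t h s := by
  rw [extp_tail, tail_cons]

lemma wgt_succ (p : ℝ) {t : ℕ} (g : Fin (t+2) → Z2) :
    wgt p (t+1) g = ENNReal.ofReal (Qp p (extp (t+1) g 0) (extp (t+1) g 1))
      * wgt p t (fun i => g i.succ) := by
  unfold wgt
  rw [Finset.prod_range_succ', mul_comm]
  congr 1
  apply Finset.prod_congr rfl
  intro s _
  rw [show s + 1 + 1 = (s+1) + 1 from rfl, extp_tail, extp_tail]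

lemma wgt_cons (p : ℝ) {t : ℕ} (z : Z2) (h : Fin (t+1) → Z2) :
    wgt p (t+1) (Fin.cons z h)
      = ENNReal.ofReal (Qp p z (extp t h 0)) * wgt p t h := by
  have e1 : extp (t+1) (Fin.cons z h) 1 = extp t h 0 := extp_cons_succ z h 0
  rw [wgt_succ, extp_cons_zero, tail_cons, e1]

lemma tsum_fiber {α β : Type*} (f : α → ℝ≥0∞) (c : α → β) :
    ∑' a, f a = ∑' b, ∑' a, (if c a = b then f a else 0) := by
  rw [ENNReal.tsum_comm]
  congr 1
  funext a
  rw [tsum_eq_single (c a) (by intro b hb; rw [if_neg (by exact fun h => hb h.symm)])]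
  simp

lemma key_split (p : ℝ) (t : ℕ) (y : Z2) (W : (Fin (t+1) → Z2) → ℝ≥0∞) :
    (∑' g : Fin (t+2) → Z2, (if extp (t+1) g 0 = y then
        ENNReal.ofReal (Qp p y (extp (t+1) g 1)) * W (fun i => g i.succ) else 0))
      = ∑' z, ENNReal.ofReal (Qp p y z)
          * ∑' h : Fin (t+1) → Z2, (if extp t h 0 = z then W h else 0) := by
  rw [← (Fin.consEquiv (fun _ : Fin (t+2) => Z2)).tsum_eq, ENNReal.tsum_prod']
  have ev : ∀ (z : Z2) (h : Fin (t+1) → Z2),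
      (if extp (t+1) ((Fin.consEquiv (fun _ : Fin (t+2) => Z2)) (z, h)) 0 = y then
        ENNReal.ofReal (Qp p y (extp (t+1) ((Fin.consEquiv (fun _ : Fin (t+2) => Z2)) (z, h)) 1))
          * W (fun i => ((Fin.consEquiv (fun _ : Fin (t+2) => Z2)) (z, h)) i.succ) else 0)
      = (if z = y then ENNReal.ofReal (Qp p y (extp t h 0)) * W h else 0) := by
    intro z h
    have e0 : (Fin.consEquiv (fun _ : Fin (t+2) => Z2)) (z, h) = Fin.cons z h := rfl
    have e1 : extp (t+1) (Fin.cons z h) 1 = extp t h 0 := extp_cons_succ z h 0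
    rw [e0, extp_cons_zero, e1, tail_cons]
  simp only [ev]
  rw [tsum_eq_single y (by intro z hz; simp [hz])]
  simp only [eq_self_iff_true, if_true]
  rw [tsum_fiber (fun h => ENNReal.ofReal (Qp p y (extp t h 0)) * W h) (fun h => extp t h 0)]
  congr 1
  funext z
  rw [← ENNReal.tsum_mul_left]
  congr 1
  funext h
  by_cases hh : extp t h 0 = z
  · rw [if_pos hh, if_pos hh, hh]
  · rw [if_neg hh, if_neg hh, mul_zero]

variable {p : ℝ} {n : ℕ}

noncomputable def sumAll (p : ℝ) (t : ℕ) (y : Z2) : ℝ≥0∞ :=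
  ∑' g : Fin (t+1) → Z2, (if extp t g 0 = y then wgt p t g else 0)

noncomputable def sumGood (p : ℝ) (n : ℕ) (t : ℕ) (y : Z2) : ℝ≥0∞ :=
  ∑' g : Fin (t+1) → Z2, (if extp t g 0 = y ∧ goodV n t g then wgt p t g else 0)

noncomputable def sumFirst (p : ℝ) (n : ℕ) (t : ℕ) (y : Z2) : ℝ≥0∞ :=
  ∑' g : Fin (t+1) → Z2, (if extp t g 0 = y ∧ firstV n t g then wgt p t g else 0)

lemma tsum_base (W : Z2 → ℝ≥0∞) :
    ∑' g : Fin 1 → Z2, W (extp 0 g 0) = ∑' z, W z := by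
  rw [← (Equiv.funUnique (Fin 1) Z2).symm.tsum_eq]
  rfl

lemma sumAll_eq_one (hp0 : 0 ≤ p) (hp1 : p ≤ 1) : ∀ t y, sumAll p t y = 1 := by
  intro t
  induction t with
  | zero =>
    intro y
    unfold sumAll
    have ev : ∀ g : Fin 1 → Z2, (if extp 0 g 0 = y then wgt p 0 g else 0)
        = (fun z => if z = y then 1 else 0) (extp 0 g 0) := by
      intro g
      simp [wgt]
    simp only [ev]
    rw [tsum_base (fun z => if z = y then 1 else 0)]
    rw [tsum_eq_single y (by intro z hz; simp [hz])]
    simp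
  | succ t ih =>
    intro y
    unfold sumAll
    have ev : ∀ g : Fin (t+2) → Z2, (if extp (t+1) g 0 = y then wgt p (t+1) g else 0)
        = (if extp (t+1) g 0 = y then
            ENNReal.ofReal (Qp p y (extp (t+1) g 1)) * wgt p t (fun i => g i.succ) else 0) := by
      intro g
      by_cases hg : extp (t+1) g 0 = y
      · rw [if_pos hg, if_pos hg, wgt_succ, hg]
      · rw [if_neg hg, if_neg hg]
    simp only [ev]
    rw [key_split]
    have hone : ∀ z : Z2, (∑' h : Fin (t+1) → Z2, (if extp t h 0 = z then wgt p t h else 0)) = 1 :=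
      fun z => ih z
    simp only [hone, mul_one]
    exact qk_rowsum hp0 hp1 y

end Paths
section PathIdent

open ENNReal

noncomputable def Wgood (p : ℝ) (n t : ℕ) : (Fin (t+1) → Z2) → ℝ≥0∞ :=
  fun h => if goodV n t h then wgt p t h else 0

noncomputable def Wfirst (p : ℝ) (n t : ℕ) : (Fin (t+1) → Z2) → ℝ≥0∞ :=
  fun h => if firstV n t h then wgt p t h else 0

variable {p : ℝ} {n : ℕ}

lemma Fh_radial_zero (hn : 1 ≤ n) {y : Z2} (hy : y ≠ origin) (hbig : n < dnorm y) (t : ℕ) :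
    ∑' z, ENNReal.ofReal (Qp p y z) * Fh p n t z = 0 := by
  have hz : ∀ z, ENNReal.ofReal (Qp p y z) * Fh p n t z = 0 := by
    intro z
    by_cases hq : Qp p y z = 0
    · simp [hq]
    · have h1 := Qp_support hy hq
      have h2 : n ≤ dnorm z := by omega
      rw [Fh_big hn h2, mul_zero]
  simp [hz]

lemma goodV_zero (g : Fin 1 → Z2) : goodV n 0 g ↔ extp 0 g 0 = origin := by
  constructor
  · rintro ⟨u, hu, ho, _⟩
    have : u = 0 := by omega
    rwa [this] at ho
  · intro h
    exact ⟨0, le_refl 0, h, fun s hs => absurd hs (by omega)⟩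

lemma firstV_zero (g : Fin 1 → Z2) : firstV n 0 g ↔ extp 0 g 0 = origin := by
  constructor
  · rintro ⟨ho, _⟩; exact ho
  · intro h; exact ⟨h, fun s hs => absurd hs (by omega)⟩

lemma goodV_succ (g : Fin (t+2) → Z2) :
    goodV n (t+1) g ↔ (extp (t+1) g 0 = origin ∨
      (dnorm (extp (t+1) g 0) ≠ n ∧ goodV n t (fun i => g i.succ))) := by
  constructor
  · rintro ⟨u, hu, ho, hs⟩
    cases u with
    | zero => exact Or.inl ho
    | succ u' =>
      refine Or.inr ⟨hs 0 (by omega), u', by omega, ?_, ?_⟩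
      · rw [← extp_tail]; exact ho
      · intro s hs'
        rw [← extp_tail]
        exact hs (s+1) (by omega)
  · rintro (h | ⟨hd, u', hu', ho, hs⟩)
    · exact ⟨0, by omega, h, fun s hs => absurd hs (by omega)⟩
    · refine ⟨u'+1, by omega, ?_, ?_⟩
      · rw [extp_tail]; exact ho
      · intro s hs'
        cases s with
        | zero => exact hd
        | succ s' => rw [extp_tail]; exact hs s' (by omega)

lemma firstV_succ (g : Fin (t+2) → Z2) :
    firstV n (t+1) g ↔ (extp (t+1) g 0 ≠ origin ∧ dnorm (extp (t+1) g 0) ≠ n)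
      ∧ firstV n t (fun i => g i.succ) := by
  constructor
  · rintro ⟨ho, hs⟩
    refine ⟨hs 0 (by omega), ?_, ?_⟩
    · rw [← extp_tail]; exact ho
    · intro s hs'
      rw [← extp_tail]
      exact hs (s+1) (by omega)
  · rintro ⟨hd, ho, hs⟩
    refine ⟨?_, ?_⟩
    · rw [extp_tail]; exact ho
    · intro s hs'
      cases s with
      | zero => exact hd
      | succ s' =>
        rw [extp_tail]
        exact hs s' (by omega)

lemma sumGood_eq_Fh (hp0 : 0 ≤ p) (hp1 : p ≤ 1) (hn : 1 ≤ n) :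
    ∀ t y, sumGood p n t y = Fh p n t y := by
  intro t
  induction t with
  | zero =>
    intro y
    unfold sumGood
    have ev : ∀ g : Fin 1 → Z2, (if extp 0 g 0 = y ∧ goodV n 0 g then wgt p 0 g else 0)
        = (fun z => if z = y ∧ z = origin then 1 else 0) (extp 0 g 0) := by
      intro g
      simp only [goodV_zero, wgt]
      split_ifs <;> simp_all
    simp only [ev]
    rw [tsum_base (fun z => if z = y ∧ z = origin then 1 else 0)]
    rw [tsum_eq_single y (by intro z hz; simp [hz]), Fh]
    by_cases hy : y = origin <;> simp [hy]
  | succ t ih =>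
    intro y
    by_cases hy : y = origin
    · have ev : ∀ g : Fin (t+2) → Z2,
          (if extp (t+1) g 0 = y ∧ goodV n (t+1) g then wgt p (t+1) g else 0)
          = (if extp (t+1) g 0 = y then wgt p (t+1) g else 0) := by
        intro g
        by_cases hg : extp (t+1) g 0 = y
        · rw [if_pos hg, if_pos ⟨hg, (goodV_succ g).2 (Or.inl (hg.trans hy))⟩]
        · rw [if_neg hg, if_neg (fun h => hg h.1)]
      unfold sumGood
      simp only [ev]
      have := sumAll_eq_one hp0 hp1 (t+1) y
      unfold sumAll at this
      rw [this, Fh, if_pos hy]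
    · by_cases hdn : dnorm y = n
      · have ev : ∀ g : Fin (t+2) → Z2,
            (if extp (t+1) g 0 = y ∧ goodV n (t+1) g then wgt p (t+1) g else 0) = 0 := by
          intro g
          rw [if_neg]
          rintro ⟨hg, hgood⟩
          rcases (goodV_succ g).1 hgood with h | ⟨h, _⟩
          · exact hy (hg.symm.trans h)
          · rw [hg] at h; exact h hdn
        unfold sumGood
        simp only [ev, tsum_zero]
        rw [Fh, if_neg hy, if_pos (le_of_eq hdn.symm)]
      · have ev : ∀ g : Fin (t+2) → Z2,
            (if extp (t+1) g 0 = y ∧ goodV n (t+1) g then wgt p (t+1) g else 0)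
            = (if extp (t+1) g 0 = y then ENNReal.ofReal (Qp p y (extp (t+1) g 1))
                * Wgood p n t (fun i => g i.succ)
              else 0) := by
          intro g
          unfold Wgood
          by_cases hg : extp (t+1) g 0 = y
          · rw [if_pos hg]
            by_cases hgt : goodV n t (fun i => g i.succ)
            · rw [if_pos ⟨hg, (goodV_succ g).2 (Or.inr ⟨by rw [hg]; exact hdn, hgt⟩)⟩,
                if_pos hgt, wgt_succ, hg]
            · rw [if_neg, if_neg hgt, mul_zero]
              rintro ⟨_, hgood⟩
              rcases (goodV_succ g).1 hgood with h | ⟨_, h⟩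
              · exact hy (hg.symm.trans h)
              · exact hgt h
          · rw [if_neg (fun h => hg h.1), if_neg hg]
        unfold sumGood
        rw [tsum_congr ev, key_split p t y (Wgood p n t)]
        have inner : ∀ z, (∑' h : Fin (t+1) → Z2,
            (if extp t h 0 = z then Wgood p n t h else 0))
            = Fh p n t z := by
          intro z
          rw [← ih z]
          unfold sumGood Wgood
          congr 1
          funext h
          by_cases h1 : extp t h 0 = z <;> by_cases h2 : goodV n t h <;>
            simp [h1, h2]
        simp only [inner]
        rw [Fh, if_neg hy]
        by_cases hny : n ≤ dnorm y
        · rw [if_pos hny]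
          exact Fh_radial_zero hn hy (lt_of_le_of_ne hny (Ne.symm hdn)) t
        · rw [if_neg hny]

lemma sumFirst_eq_Gh (hp0 : 0 ≤ p) (hp1 : p ≤ 1) (hn : 1 ≤ n) :
    ∀ t y, sumFirst p n t y = Gh p n t y := by
  intro t
  induction t with
  | zero =>
    intro y
    unfold sumFirst
    have ev : ∀ g : Fin 1 → Z2, (if extp 0 g 0 = y ∧ firstV n 0 g then wgt p 0 g else 0)
        = (fun z => if z = y ∧ z = origin then 1 else 0) (extp 0 g 0) := by
      intro g
      simp only [firstV_zero, wgt]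
      split_ifs <;> simp_all
    simp only [ev]
    rw [tsum_base (fun z => if z = y ∧ z = origin then 1 else 0)]
    rw [tsum_eq_single y (by intro z hz; simp [hz]), Gh]
    by_cases hy : y = origin <;> simp [hy]
  | succ t ih =>
    intro y
    by_cases hcond : y ≠ origin ∧ dnorm y ≠ n
    · have ev : ∀ g : Fin (t+2) → Z2,
          (if extp (t+1) g 0 = y ∧ firstV n (t+1) g then wgt p (t+1) g else 0)
          = (if extp (t+1) g 0 = y then ENNReal.ofReal (Qp p y (extp (t+1) g 1))
              * Wfirst p n t (fun i => g i.succ)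
            else 0) := by
        intro g
        unfold Wfirst
        by_cases hg : extp (t+1) g 0 = y
        · rw [if_pos hg]
          by_cases hgt : firstV n t (fun i => g i.succ)
          · rw [if_pos ⟨hg, (firstV_succ g).2 ⟨⟨by rw [hg]; exact hcond.1,
              by rw [hg]; exact hcond.2⟩, hgt⟩⟩, if_pos hgt, wgt_succ, hg]
          · rw [if_neg, if_neg hgt, mul_zero]
            rintro ⟨_, hfirst⟩
            exact hgt ((firstV_succ g).1 hfirst).2
        · rw [if_neg (fun h => hg h.1), if_neg hg]
      unfold sumFirst
      rw [tsum_congr ev, key_split p t y (Wfirst p n t)]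
      have inner : ∀ z, (∑' h : Fin (t+1) → Z2,
          (if extp t h 0 = z then Wfirst p n t h else 0))
          = Gh p n t z := by
        intro z
        rw [← ih z]
        unfold sumFirst Wfirst
        congr 1
        funext h
        by_cases h1 : extp t h 0 = z <;> by_cases h2 : firstV n t h <;>
          simp [h1, h2]
      simp only [inner]
      rw [Gh, if_pos hcond]
    · have ev : ∀ g : Fin (t+2) → Z2,
          (if extp (t+1) g 0 = y ∧ firstV n (t+1) g then wgt p (t+1) g else 0) = 0 := by
        intro g
        rw [if_neg]
        rintro ⟨hg, hfirst⟩
        have := ((firstV_succ g).1 hfirst).1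
        rw [hg] at this
        exact hcond ⟨this.1, this.2⟩
      unfold sumFirst
      simp only [ev, tsum_zero]
      rw [Gh, if_neg hcond]

end PathIdent
section MeasurePart

open ENNReal

variable {p : ℝ} {n : ℕ} {Ω : Type} [MeasurableSpace Ω] {P : Measure Ω}
  {X : ℕ → Ω → Z2} {x : Z2}

lemma hitLe (X : ℕ → Ω → Z2) (A : Set Z2) (ω : Ω) (t : ℕ) :
    hitTimeE X A ω ≤ (t : ℕ∞) ↔ ∃ s ≤ t, X s ω ∈ A := by
  unfold hitTimeE
  constructor
  · intro h
    by_contra hc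
    push_neg at hc
    have hle : ((t+1 : ℕ) : ℕ∞) ≤ sInf ((fun t : ℕ => (t : ℕ∞)) '' {t | X t ω ∈ A}) := by
      apply le_sInf
      rintro b ⟨s, hs, rfl⟩
      have hst : ¬ s ≤ t := fun hle => hc s hle hs
      show ((t+1 : ℕ) : ℕ∞) ≤ ((s : ℕ) : ℕ∞)
      exact_mod_cast (by omega : t + 1 ≤ s)
    have h2 := le_trans hle h
    have h3 : (t + 1 : ℕ) ≤ t := by exact_mod_cast h2
    omega
  · rintro ⟨s, hs, hmem⟩
    refine le_trans (sInf_le ⟨s, hmem, rfl⟩) ?_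
    show ((s : ℕ) : ℕ∞) ≤ ((t : ℕ) : ℕ∞)
    exact_mod_cast hs

lemma cyl_measure (hp0 : 0 ≤ p) (hp1 : p ≤ 1) (hwalk : IsWalkFrom P X (Qp p) x)
    (t : ℕ) (g : Fin (t+1) → Z2) :
    P {ω | ∀ s ≤ t, X s ω = extp t g s}
      = (if extp t g 0 = x then 1 else 0) * wgt p t g := by
  rw [hwalk t (extp t g)]
  rw [ENNReal.ofReal_mul (by split_ifs <;> norm_num)]
  congr 1
  · split_ifs <;> simp
  · rw [ENNReal.ofReal_prod_of_nonneg (fun i _ => Qp_nonneg hp0 hp1 _ _)]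
    rfl

lemma cyl_subset_E (hn1 : 1 ≤ n) {T : ℕ} {g : Fin (T+1) → Z2} (hgood : goodV n T g)
    {ω : Ω} (hω : ∀ s ≤ T, X s ω = extp T g s) :
    hitTimeE X {origin} ω < hitTimeE X (layer n) ω := by
  obtain ⟨u, hu, ho, hLn⟩ := hgood
  have hτo : hitTimeE X {origin} ω ≤ (u : ℕ∞) := by
    rw [hitLe]
    exact ⟨u, le_refl u, by rw [hω u hu, ho]; rfl⟩
  have hτn : ¬ hitTimeE X (layer n) ω ≤ (u : ℕ∞) := by
    rw [hitLe]
    rintro ⟨s, hs, hmem⟩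
    have hXs : X s ω = extp T g s := hω s (le_trans hs hu)
    have hd : dnorm (extp T g s) = n := by rw [← hXs]; exact hmem
    rcases lt_or_eq_of_le hs with h | h
    · exact hLn s h hd
    · rw [h, ho] at hd
      rw [dnorm_origin] at hd
      omega
  exact lt_of_le_of_lt hτo (not_le.1 hτn)

lemma lower_bound (hp0 : 0 ≤ p) (hp1 : p ≤ 1) (hn1 : 1 ≤ n)
    [IsProbabilityMeasure P] (hwalk : IsWalkFrom P X (Qp p) x) (T : ℕ) :
    Fh p n T x ≤ P {ω | hitTimeE X {origin} ω < hitTimeE X (layer n) ω} := by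
  set E := {ω | hitTimeE X {origin} ω < hitTimeE X (layer n) ω} with hE
  set B := ⋃ g : Fin (T+1) → Z2,
    (if ¬(extp T g 0 = x ∧ goodV n T g) then {ω | ∀ s ≤ T, X s ω = extp T g s} else ∅) with hB
  have hcover : (Set.univ : Set Ω) ⊆ E ∪ B := by
    intro ω _
    set g : Fin (T+1) → Z2 := fun i => X i ω with hg
    have hcyl : ∀ s ≤ T, X s ω = extp T g s := by
      intro s hs
      rw [extp_le g hs]
    by_cases hc : extp T g 0 = x ∧ goodV n T g
    · exact Or.inl (cyl_subset_E hn1 hc.2 hcyl)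
    · refine Or.inr (Set.mem_iUnion.2 ⟨g, ?_⟩)
      rw [if_pos hc]
      exact hcyl
  set Sbad := ∑' g : Fin (T+1) → Z2,
      (if ¬(extp T g 0 = x ∧ goodV n T g) then (if extp T g 0 = x then 1 else 0) * wgt p T g
        else 0) with hSbad
  have hPB : P B ≤ Sbad := by
    rw [hSbad]
    refine le_trans (measure_iUnion_le _) (ENNReal.tsum_le_tsum fun g => ?_)
    by_cases h : ¬(extp T g 0 = x ∧ goodV n T g)
    · rw [if_pos h, if_pos h]
      exact le_of_eq (cyl_measure hp0 hp1 hwalk T g)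
    · rw [if_neg h, if_neg h]
      simp
  have hsplit : sumGood p n T x + Sbad = 1 := by
    have e : sumGood p n T x + Sbad = sumAll p T x := by
      rw [hSbad]
      unfold sumGood sumAll
      rw [← Summable.tsum_add ENNReal.summable ENNReal.summable]
      apply tsum_congr
      intro g
      by_cases h1 : extp T g 0 = x
      · by_cases h2 : goodV n T g
        · simp [h1, h2]
        · simp [h1, h2]
      · simp [h1]
    rw [e, sumAll_eq_one hp0 hp1 T x]
  have hB_le_one : Sbad ≠ ⊤ := by
    intro htop
    rw [htop] at hsplit
    simp at hsplit
  have hone : (1 : ℝ≥0∞) ≤ P E + Sbad := by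
    calc (1 : ℝ≥0∞) = P Set.univ := (measure_univ).symm
    _ ≤ P (E ∪ B) := measure_mono hcover
    _ ≤ P E + P B := measure_union_le E B
    _ ≤ _ := add_le_add le_rfl hPB
  have hone' : sumGood p n T x + Sbad ≤ P E + Sbad := le_trans (le_of_eq hsplit) hone
  rw [← sumGood_eq_Fh hp0 hp1 hn1 T x]
  exact (ENNReal.add_le_add_iff_right hB_le_one).1 hone'

lemma upper_bound (hp0 : 0 ≤ p) (hp1 : p ≤ 1) (hn1 : 1 ≤ n)
    (hwalk : IsWalkFrom P X (Qp p) x) :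
    P {ω | hitTimeE X {origin} ω < hitTimeE X (layer n) ω}
      ≤ ∑' t : ℕ, Gh p n t x := by
  set E := {ω | hitTimeE X {origin} ω < hitTimeE X (layer n) ω} with hE
  have hcover : E ⊆ ⋃ tg : Σ t : ℕ, (Fin (t+1) → Z2),
      (if firstV n tg.1 tg.2 then {ω | ∀ s ≤ tg.1, X s ω = extp tg.1 tg.2 s} else ∅) := by
    intro ω hω
    have hlt : hitTimeE X {origin} ω < hitTimeE X (layer n) ω := hω
    have hne : hitTimeE X {origin} ω ≠ ⊤ := ne_top_of_lt hlt
    obtain ⟨m, hm⟩ := WithTop.ne_top_iff_exists.1 hne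
    have hhit : ∃ s, X s ω ∈ ({origin} : Set Z2) := by
      have : hitTimeE X {origin} ω ≤ (m : ℕ∞) := le_of_eq hm.symm
      obtain ⟨s, _, hs⟩ := (hitLe X {origin} ω m).1 this
      exact ⟨s, hs⟩
    have hhit' : ∃ s, X s ω = origin := by
      obtain ⟨s, hs⟩ := hhit
      exact ⟨s, hs⟩
    set t0 := Nat.find hhit' with ht0
    have ht0spec : X t0 ω = origin := Nat.find_spec hhit'
    have ht0min : ∀ s < t0, X s ω ≠ origin := fun s hs => Nat.find_min hhit' hs
    have hτo_ge : (t0 : ℕ∞) ≤ hitTimeE X {origin} ω := by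
      by_contra hc
      push_neg at hc
      rw [← hm] at hc
      have hmlt : m < t0 := Nat.cast_lt.mp hc
      have hle : hitTimeE X {origin} ω ≤ (m : ℕ∞) := le_of_eq hm.symm
      obtain ⟨s, hsm, hs⟩ := (hitLe X {origin} ω m).1 hle
      exact ht0min s (by omega) hs
    set g : Fin (t0+1) → Z2 := fun i => X i ω with hg
    have hcyl : ∀ s ≤ t0, X s ω = extp t0 g s := by
      intro s hs
      rw [extp_le g hs]
    have hfirst : firstV n t0 g := by
      constructor
      · rw [← hcyl t0 (le_refl t0)]
        exact ht0spec
      · intro s hs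
        rw [← hcyl s (le_of_lt hs)]
        refine ⟨ht0min s hs, fun hd => ?_⟩
        have hτn : hitTimeE X (layer n) ω ≤ (s : ℕ∞) :=
          (hitLe X (layer n) ω s).2 ⟨s, le_refl s, hd⟩
        have h1 : hitTimeE X {origin} ω < (s : ℕ∞) := lt_of_lt_of_le hlt hτn
        have h2 : (t0 : ℕ∞) < (s : ℕ∞) := lt_of_le_of_lt hτo_ge h1
        have : t0 < s := by exact_mod_cast h2
        omega
    refine Set.mem_iUnion.2 ⟨⟨t0, g⟩, ?_⟩
    rw [if_pos hfirst]
    exact hcyl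
  calc P E ≤ ∑' tg : Σ t : ℕ, (Fin (t+1) → Z2),
        P (if firstV n tg.1 tg.2 then {ω | ∀ s ≤ tg.1, X s ω = extp tg.1 tg.2 s} else ∅) :=
        le_trans (measure_mono hcover) (measure_iUnion_le _)
    _ = ∑' t : ℕ, ∑' g : Fin (t+1) → Z2,
        P (if firstV n t g then {ω | ∀ s ≤ t, X s ω = extp t g s} else ∅) :=
        ENNReal.tsum_sigma' _
    _ ≤ ∑' t : ℕ, Gh p n t x := by
        apply ENNReal.tsum_le_tsum
        intro t
        rw [← sumFirst_eq_Gh hp0 hp1 hn1 t x]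
        unfold sumFirst
        apply ENNReal.tsum_le_tsum
        intro g
        by_cases hf : firstV n t g
        · rw [if_pos hf, cyl_measure hp0 hp1 hwalk t g]
          by_cases hx1 : extp t g 0 = x
          · rw [if_pos hx1, if_pos (show extp t g 0 = x ∧ firstV n t g from ⟨hx1, hf⟩), one_mul]
          · rw [if_neg hx1, if_neg (show ¬(extp t g 0 = x ∧ firstV n t g) from fun h => hx1 h.1), zero_mul]
        · rw [if_neg hf]
          simp

end MeasurePart
/-- **Lemma (gambler's ruin).** For the walk with kernel `Q_p` started at `x ∈ L_ℓ`,
`0 < ℓ < n`: if `p ≠ q` then `P_x(τ_o < τ_n) = (rⁿ − r^ℓ)/(rⁿ − 1)` with `r = p/q`;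
if `p = q = 1/2` then `P_x(τ_o < τ_n) = (n−ℓ)/n`. In particular the probability
depends only on `ℓ = ‖x‖`. -/
theorem statement6
    (p : ℝ) (hp : p ∈ Set.Ico (0 : ℝ) 1)
    {Ω : Type} [MeasurableSpace Ω] (P : Measure Ω) [IsProbabilityMeasure P]
    (ℓ n : ℕ) (hℓ : 0 < ℓ) (hn : ℓ < n)
    (x : Z2) (hx : dnorm x = ℓ)
    (X : ℕ → Ω → Z2) (hwalk : IsWalkFrom P X (Qp p) x) :
    (p ≠ 1 - p →
      P {ω | hitTimeE X {origin} ω < hitTimeE X (layer n) ω}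
        = ENNReal.ofReal (((p / (1 - p)) ^ n - (p / (1 - p)) ^ ℓ) / ((p / (1 - p)) ^ n - 1))) ∧
    (p = 1 / 2 →
      P {ω | hitTimeE X {origin} ω < hitTimeE X (layer n) ω}
        = ENNReal.ofReal (((n : ℝ) - (ℓ : ℝ)) / (n : ℝ))) := by
  have hp0 : 0 ≤ p := hp.1
  have hp1 : p < 1 := hp.2
  have hp1' : p ≤ 1 := le_of_lt hp1
  have hn1 : 1 ≤ n := by omega
  have hq : (1:ℝ) - p ≠ 0 := by linarith
  -- step 1 : P E = ⨆ T, Fh p n T x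
  have key : P {ω | hitTimeE X {origin} ω < hitTimeE X (layer n) ω}
      = ⨆ T, Fh p n T x := by
    apply le_antisymm
    · calc P {ω | hitTimeE X {origin} ω < hitTimeE X (layer n) ω}
          ≤ ∑' t : ℕ, Gh p n t x := upper_bound hp0 hp1' hn1 hwalk
      _ = ⨆ T, ∑ t ∈ Finset.range T, Gh p n t x := ENNReal.tsum_eq_iSup_nat
      _ ≤ ⨆ T, Fh p n T x := by
          apply iSup_le
          intro T
          cases T with
          | zero => simp
          | succ T' =>
            rw [Gh_sum hp0 hp1' hn1 T' x]
            exact le_iSup (fun T => Fh p n T x) T'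
    · exact iSup_le fun T => lower_bound hp0 hp1' hn1 hwalk T
  -- step 2 : ⨆ T, Fh p n T x = ofReal (Flim p n ℓ)
  have key2 : (⨆ T, Fh p n T x) = ENNReal.ofReal (Flim p n ℓ) := by
    have hFh : ∀ T, Fh p n T x = ENNReal.ofReal (Fr p n T ℓ) := by
      intro T
      rw [Fh_eq_Fr hp0 hp1' hn1 T x, hx]
    simp only [hFh]
    have hmon : Monotone (fun T => ENNReal.ofReal (Fr p n T ℓ)) :=
      fun a b hab => ENNReal.ofReal_le_ofReal ((Fr_monotone hp0 hp1' ℓ) hab)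
    have t2 := tendsto_atTop_iSup hmon
    have t1 : Filter.Tendsto (fun T => ENNReal.ofReal (Fr p n T ℓ)) Filter.atTop
        (nhds (ENNReal.ofReal (Flim p n ℓ))) :=
      (ENNReal.continuous_ofReal.tendsto _).comp (Flim_tendsto hp0 hp1' ℓ)
    exact tendsto_nhds_unique t2 t1
  have key3 : P {ω | hitTimeE X {origin} ω < hitTimeE X (layer n) ω}
      = ENNReal.ofReal ((Wg p n - Wg p ℓ) / Wg p n) := by
    rw [key, key2, Flim_eq_ratio hp0 hp1 hn1 ℓ (le_of_lt hn)]
  constructor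
  · intro hne
    set r : ℝ := p / (1-p) with hrdef
    have hr1 : r ≠ 1 := by
      intro h
      apply hne
      rw [hrdef] at h
      field_simp at h
      linarith
    have hr0 : 0 ≤ r := div_nonneg hp0 (by linarith)
    have hrn : r^n ≠ 1 := by
      rcases lt_or_gt_of_ne hr1 with h | h
      · exact ne_of_lt (pow_lt_one₀ hr0 h (by omega))
      · exact ne_of_gt (one_lt_pow₀ h (by omega))
    have hWn : Wg p n = (r^n - 1)/(r - 1) := geom_sum_eq hr1 n
    have hWl : Wg p ℓ = (r^ℓ - 1)/(r - 1) := geom_sum_eq hr1 ℓ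
    rw [key3]
    congr 1
    rw [hWn, hWl]
    have h1 : r - 1 ≠ 0 := sub_ne_zero.2 hr1
    have h2 : r^n - 1 ≠ 0 := sub_ne_zero.2 hrn
    field_simp
    ring
  · intro hhalf
    subst hhalf
    have hWg : ∀ k : ℕ, Wg (1/2) k = (k : ℝ) := by
      intro k
      unfold Wg
      rw [show (1:ℝ)/2 / (1 - 1/2) = 1 by norm_num]
      simp
    rw [key3, hWg, hWg]
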